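/- Let Q ∈ ℝ^{n×n} be symmetric and S ∈ ℝ^{n×q} be such that SᵀQS is positive definite (in particular invertible). Define P := S(SᵀQS)⁻¹Sᵀ·Q and W := Q·P + (I−P)ᵀ(I−P). Then W is symmetric, positive definite, and satisfies the action constraint W·S = Q·S. (Hence a symmetric positive definite weighting matrix whose action on S agrees with that of Q always exists when SᵀQS is positive definite.) -/

import Mathlib

open Matrix

/-- If `SᵀQS` is positive definite, then `W := Q·P + (I−P)ᵀ(I−P)` with
`P := S(SᵀQS)⁻¹SᵀQ` is a symmetric positive definite weighting matrix satisfying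
the action constraint `W·S = Q·S`. -/
theorem stmt7 {n q : ℕ} (Q : Matrix (Fin n) (Fin n) ℝ) (hQ : Q.IsSymm)
    (S : Matrix (Fin n) (Fin q) ℝ) (hSQS : (Sᵀ * Q * S).PosDef) :
    ((Q * (S * (Sᵀ * Q * S)⁻¹ * Sᵀ * Q) +
        (1 - S * (Sᵀ * Q * S)⁻¹ * Sᵀ * Q)ᵀ * (1 - S * (Sᵀ * Q * S)⁻¹ * Sᵀ * Q)).IsSymm) ∧
    ((Q * (S * (Sᵀ * Q * S)⁻¹ * Sᵀ * Q) +
        (1 - S * (Sᵀ * Q * S)⁻¹ * Sᵀ * Q)ᵀ * (1 - S * (Sᵀ * Q * S)⁻¹ * Sᵀ * Q)).PosDef) ∧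
    (Q * (S * (Sᵀ * Q * S)⁻¹ * Sᵀ * Q) +
        (1 - S * (Sᵀ * Q * S)⁻¹ * Sᵀ * Q)ᵀ * (1 - S * (Sᵀ * Q * S)⁻¹ * Sᵀ * Q)) * S = Q * S := by
  set A : Matrix (Fin q) (Fin q) ℝ := (Sᵀ * Q * S)⁻¹ with hAdef
  have hA : A.PosDef := hSQS.inv
  have hAsymm : Aᵀ = A := by
    have := hA.isHermitian
    rwa [Matrix.IsHermitian, conjTranspose_eq_transpose_of_trivial] at this
  have hQsymm : Qᵀ = Q := hQ
  set P : Matrix (Fin n) (Fin n) ℝ := S * A * Sᵀ * Q with hPdef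
  have hinv : A * (Sᵀ * Q * S) = 1 :=
    Matrix.nonsing_inv_mul _ ((Matrix.isUnit_iff_isUnit_det _).1 hSQS.isUnit)
  have hPS : P * S = S := by
    calc P * S = S * (A * (Sᵀ * Q * S)) := by
          simp only [hPdef, Matrix.mul_assoc]
      _ = S := by rw [hinv, Matrix.mul_one]
  -- symmetry of Q * P
  have hQP : (Q * P)ᵀ = Q * P := by
    simp only [hPdef, Matrix.transpose_mul, Matrix.transpose_transpose, hAsymm, hQsymm,
      Matrix.mul_assoc]
  have hWsymm : (Q * P + (1 - P)ᵀ * (1 - P)).IsSymm := by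
    rw [Matrix.IsSymm, Matrix.transpose_add, hQP, Matrix.transpose_mul,
      Matrix.transpose_transpose]
  have hWS : (Q * P + (1 - P)ᵀ * (1 - P)) * S = Q * S := by
    rw [Matrix.add_mul, Matrix.mul_assoc (1 - P)ᵀ, Matrix.sub_mul, Matrix.one_mul, hPS,
      sub_self, Matrix.mul_zero, add_zero, Matrix.mul_assoc, hPS]
  refine ⟨hWsymm, posDef_iff_dotProduct_mulVec.2 ⟨?_, ?_⟩, hWS⟩
  · rwa [Matrix.IsHermitian, conjTranspose_eq_transpose_of_trivial]
  · intro x hx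
    have hself : ∀ v : Fin n → ℝ, 0 ≤ v ⬝ᵥ v := fun v =>
      Finset.sum_nonneg fun i _ => mul_self_nonneg _
    have hselfpos : ∀ v : Fin n → ℝ, v ≠ 0 → 0 < v ⬝ᵥ v := fun v hv =>
      lt_of_le_of_ne (hself v) fun h => hv (dotProduct_self_eq_zero.mp h.symm)
    set y : Fin q → ℝ := (Sᵀ * Q) *ᵥ x with hy
    set z : Fin n → ℝ := (1 - P) *ᵥ x with hz
    have hterm1 : x ⬝ᵥ (Q * P) *ᵥ x = y ⬝ᵥ A *ᵥ y := by
      have hrw : Q * P = (Sᵀ * Q)ᵀ * (A * (Sᵀ * Q)) := by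
        simp only [hPdef, Matrix.transpose_mul, Matrix.transpose_transpose, hQsymm,
          Matrix.mul_assoc]
      rw [hrw, ← Matrix.mulVec_mulVec, dotProduct_mulVec, vecMul_transpose,
        ← Matrix.mulVec_mulVec, hy]
      simp [Matrix.mulVec_mulVec]
    have hterm2 : x ⬝ᵥ ((1 - P)ᵀ * (1 - P)) *ᵥ x = z ⬝ᵥ z := by
      rw [← Matrix.mulVec_mulVec, dotProduct_mulVec, vecMul_transpose, hz]
    have hsplit : x ⬝ᵥ (Q * P + (1 - P)ᵀ * (1 - P)) *ᵥ x = y ⬝ᵥ A *ᵥ y + z ⬝ᵥ z := by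
      rw [Matrix.add_mulVec, dotProduct_add, hterm1, hterm2]
    have h1nonneg : 0 ≤ y ⬝ᵥ A *ᵥ y := by
      have := (posSemidef_iff_dotProduct_mulVec.1 hA.posSemidef).2 y
      simpa using this
    have key : 0 < y ⬝ᵥ A *ᵥ y + z ⬝ᵥ z := by
      by_cases h1 : z = 0
      · have hxP : x = P *ᵥ x := by
          have h2 : x - P *ᵥ x = 0 := by
            rw [hz, Matrix.sub_mulVec, Matrix.one_mulVec] at h1
            exact h1
          exact sub_eq_zero.mp h2
        have hy0 : y ≠ 0 := by
          intro hy0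
          apply hx
          have hPy : P *ᵥ x = (S * A) *ᵥ y := by
            rw [hy, Matrix.mulVec_mulVec, hPdef, Matrix.mul_assoc (S * A)]
          rw [hxP, hPy, hy0, Matrix.mulVec_zero]
        have := (posDef_iff_dotProduct_mulVec.1 hA).2 hy0
        rw [star_trivial] at this
        rw [h1]
        simpa using this
      · exact add_pos_of_nonneg_of_pos h1nonneg (hselfpos z h1)
    rw [star_trivial, hsplit]
    exact key
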